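/- Let V be a finite-dimensional vector space over a non-Archimedean valued field K, and let ‖·‖₀, ‖·‖₁ be two ultrametric norms on V diagonalized by a common basis (s₁,…,s_d). Define the geodesic norm ‖·‖ₜ for t ∈ [0,1] by ‖Σ aᵢsᵢ‖ₜ = maxᵢ |aᵢ|·‖sᵢ‖₀^{1-t}·‖sᵢ‖₁^t. Then for every v ∈ V and t ∈ [0,1], ‖v‖ₜ ≤ ‖v‖₀^{1-t}·‖v‖₁^t (log-convexity of norm geodesics). -/

import Mathlib

/-- The ultrametric norm on `V` diagonalized by the basis `b`, with values `w i` on the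
basis vectors: `N (∑ aᵢ sᵢ) = maxᵢ |aᵢ| · w i`. -/
noncomputable def diagNorm {K V ι : Type*} [NontriviallyNormedField K]
    [AddCommGroup V] [Module K V] [Fintype ι] [Nonempty ι]
    (b : Module.Basis ι K V) (w : ι → ℝ) (v : V) : ℝ :=
  Finset.univ.sup' Finset.univ_nonempty fun i => ‖b.repr v i‖ * w i

/-- Log-convexity of norm geodesics: the geodesic norm at time `t` between two ultrametric
norms codiagonalized by a basis is bounded by the geometric interpolation of the endpoint
norms. -/
theorem stmt_0 {K V ι : Type*} [NontriviallyNormedField K] [IsUltrametricDist K]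
    [AddCommGroup V] [Module K V] [Fintype ι] [Nonempty ι]
    (b : Module.Basis ι K V) (w0 w1 : ι → ℝ) (hw0 : ∀ i, 0 < w0 i) (hw1 : ∀ i, 0 < w1 i)
    (t : ℝ) (ht : t ∈ Set.Icc (0:ℝ) 1) (v : V) :
    diagNorm b (fun i => w0 i ^ (1 - t) * w1 i ^ t) v
      ≤ (diagNorm b w0 v) ^ (1 - t) * (diagNorm b w1 v) ^ t := by
  obtain ⟨ht0, ht1⟩ := ht
  have h1t : (0:ℝ) ≤ 1 - t := by linarith
  have hN0 : 0 ≤ diagNorm b w0 v := by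
    refine le_trans ?_ (Finset.le_sup' _ (Finset.mem_univ (Classical.arbitrary ι)))
    exact mul_nonneg (norm_nonneg _) (hw0 _).le
  have hN1 : 0 ≤ diagNorm b w1 v := by
    refine le_trans ?_ (Finset.le_sup' _ (Finset.mem_univ (Classical.arbitrary ι)))
    exact mul_nonneg (norm_nonneg _) (hw1 _).le
  apply Finset.sup'_le
  intro i _
  have h0 : ‖b.repr v i‖ * w0 i ≤ diagNorm b w0 v :=
    Finset.le_sup' (fun j => ‖b.repr v j‖ * w0 j) (Finset.mem_univ i)
  have h1 : ‖b.repr v i‖ * w1 i ≤ diagNorm b w1 v :=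
    Finset.le_sup' (fun j => ‖b.repr v j‖ * w1 j) (Finset.mem_univ i)
  rcases eq_or_lt_of_le (norm_nonneg (b.repr v i)) with h | h
  · rw [← h]
    simp only [zero_mul]
    positivity
  · have key : ‖b.repr v i‖ * (w0 i ^ (1 - t) * w1 i ^ t)
        = (‖b.repr v i‖ * w0 i) ^ (1 - t) * (‖b.repr v i‖ * w1 i) ^ t := by
      rw [Real.mul_rpow h.le (hw0 i).le, Real.mul_rpow h.le (hw1 i).le]
      rw [show (‖b.repr v i‖ ^ (1 - t) * w0 i ^ (1 - t)) * (‖b.repr v i‖ ^ t * w1 i ^ t)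
        = (‖b.repr v i‖ ^ (1 - t) * ‖b.repr v i‖ ^ t) * (w0 i ^ (1 - t) * w1 i ^ t) by ring]
      rw [← Real.rpow_add h, sub_add_cancel, Real.rpow_one]
    rw [key]
    have e0 : 0 ≤ ‖b.repr v i‖ * w0 i := mul_nonneg h.le (hw0 i).le
    have e1 : 0 ≤ ‖b.repr v i‖ * w1 i := mul_nonneg h.le (hw1 i).le
    exact mul_le_mul (Real.rpow_le_rpow e0 h0 h1t)
      (Real.rpow_le_rpow e1 h1 ht0) (Real.rpow_nonneg e1 t) (Real.rpow_nonneg hN0 _)
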